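/- The rectangular parallelepiped P = [0,a] × [0,b] × [0,c] with 0 < a ≤ b ≤ c is m-point homogeneous for every natural m if and only if a² + b² ≠ c². If a² + b² = c², then P is homogeneous (vertex-transitive) but not 2-point homogeneous. -/

import Mathlib

set_option maxRecDepth 40000

/-- A subset `M` of a metric space is `m`-point homogeneous if every distance-preserving
correspondence between two `m`-tuples of points of `M` is realized by an isometry of `M`. -/
def mPointHomogeneous {X : Type*} [MetricSpace X] (M : Set X) (m : ℕ) : Prop :=
  ∀ A B : Fin m → ↥M, (∀ i j, dist (A i) (A j) = dist (B i) (B j)) →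
    ∃ e : ↥M ≃ᵢ ↥M, ∀ i, e (A i) = B i

/-- The vertex set `{0,a} × {0,b} × {0,c}` of the rectangular parallelepiped
`[0,a] × [0,b] × [0,c]` in `ℝ³`. -/
def boxVerts (a b c : ℝ) : Set (EuclideanSpace ℝ (Fin 3)) :=
  {p | (p 0 = 0 ∨ p 0 = a) ∧ (p 1 = 0 ∨ p 1 = b) ∧ (p 2 = 0 ∨ p 2 = c)}

abbrev V3 := Bool × Bool × Bool

def xo (u v : V3) : V3 := (xor u.1 v.1, xor u.2.1 v.2.1, xor u.2.2 v.2.2)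

def s12 (t : V3) : V3 := (t.2.1, t.1, t.2.2)
def s23 (t : V3) : V3 := (t.1, t.2.2, t.2.1)
def s13 (t : V3) : V3 := (t.2.2, t.2.1, t.1)
def rr1 (t : V3) : V3 := (t.2.1, t.2.2, t.1)
def rr2 (t : V3) : V3 := (t.2.2, t.1, t.2.1)

def Lee (e1 e2 : Bool) : List (V3 → V3) :=
  id :: ((if e1 then [s12] else []) ++ (if e2 then [s23] else []) ++
    (if e1 && e2 then [s13, rr1, rr2] else []))

def D (e1 e2 : Bool) (t t' : V3) : Prop := ∃ σ ∈ Lee e1 e2, σ t = t'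

instance (e1 e2 t t') : Decidable (D e1 e2 t t') := by unfold D; infer_instance

lemma xo_cancel : ∀ u v w : V3, xo (xo u w) (xo v w) = xo u v := by decide
lemma xo_xo : ∀ t w : V3, xo (xo t w) w = t := by decide
lemma xo_left : ∀ u v : V3, xo u (xo u v) = v := by decide

lemma lee_id (e1 e2 : Bool) : id ∈ Lee e1 e2 := by simp [Lee]

lemma lee_inv : ∀ e1 e2 : Bool, ∀ σ ∈ Lee e1 e2, ∃ τ ∈ Lee e1 e2,
    (∀ v, τ (σ v) = v) ∧ (∀ v, σ (τ v) = v) := by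
  intro e1 e2 σ hσ
  cases e1 <;> cases e2 <;> fin_cases hσ <;> decide

lemma lee_comp : ∀ e1 e2 : Bool, ∀ σ ∈ Lee e1 e2, ∀ τ ∈ Lee e1 e2,
    ∃ ρ ∈ Lee e1 e2, ∀ v, ρ v = σ (τ v) := by
  intro e1 e2 σ hσ τ hτ
  cases e1 <;> cases e2 <;> fin_cases hσ <;> fin_cases hτ <;> decide

lemma lee_xo : ∀ e1 e2 : Bool, ∀ σ ∈ Lee e1 e2, ∀ u v, σ (xo u v) = xo (σ u) (σ v) := by
  intro e1 e2 σ hσ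
  cases e1 <;> cases e2 <;> fin_cases hσ <;> decide

lemma lee_const : ∀ e1 e2 : Bool, ∀ σ ∈ Lee e1 e2,
    σ (false, false, false) = (false, false, false) ∧
    σ (true, true, true) = (true, true, true) := by
  intro e1 e2 σ hσ
  cases e1 <;> cases e2 <;> fin_cases hσ <;> decide

lemma lee_P2 : ∀ e1 e2 : Bool, ∀ s u u' : V3,
    (D e1 e2 u u' ∧ D e1 e2 (xo u s) (xo u' s)) →
    ∃ τ ∈ Lee e1 e2, τ s = s ∧ τ u = u' := by
  intro e1 e2
  cases e1 <;> cases e2 <;> decide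

lemma lee_P3 : ∀ e1 e2 : Bool, ∀ τ ∈ Lee e1 e2, ∀ τ' ∈ Lee e1 e2, ∀ s u v : V3,
    (s ≠ (false,false,false) ∧ s ≠ (true,true,true) ∧ τ s = s ∧ τ' s = s ∧ τ' v ≠ v ∧
      D e1 e2 (xo u v) (xo (τ u) (τ' v))) → τ' u = τ u := by
  intro e1 e2 τ hτ τ' hτ'
  cases e1 <;> cases e2 <;> fin_cases hτ <;> fin_cases hτ' <;> decide

lemma D_trans (e1 e2 : Bool) {t t' : V3} (τ : V3 → V3) (hτ : τ ∈ Lee e1 e2)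
    (h : D e1 e2 t t') : D e1 e2 t (τ t') := by
  obtain ⟨σ, hσ, he⟩ := h
  obtain ⟨ρ, hρ, hval⟩ := lee_comp e1 e2 τ hτ σ hσ
  exact ⟨ρ, hρ, by rw [hval, he]⟩

lemma core2 (e1 e2 : Bool) {m : ℕ} (A B : Fin m → V3)
    (h : ∀ i j, D e1 e2 (xo (A i) (A j)) (xo (B i) (B j)))
    (h0 : ∀ i, D e1 e2 (A i) (B i)) (k : Fin m) (hk : B k = A k)
    (hnc1 : A k ≠ (false,false,false)) (hnc2 : A k ≠ (true,true,true)) :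
    ∃ σ ∈ Lee e1 e2, ∀ i, σ (A i) = B i := by
  by_cases hAll : ∀ i, B i = A i
  · exact ⟨id, lee_id e1 e2, fun i => (hAll i).symm⟩
  · push_neg at hAll
    obtain ⟨l, hl⟩ := hAll
    obtain ⟨τ', hτ'mem, hτ's, hτ'l⟩ :=
      lee_P2 e1 e2 (A k) (A l) (B l) ⟨h0 l, by have := h l k; rwa [hk] at this⟩
    refine ⟨τ', hτ'mem, fun i => ?_⟩
    obtain ⟨τ, hτmem, hτs, hτi⟩ :=
      lee_P2 e1 e2 (A k) (A i) (B i) ⟨h0 i, by have := h i k; rwa [hk] at this⟩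
    have key : τ' (A i) = τ (A i) := by
      refine lee_P3 e1 e2 τ hτmem τ' hτ'mem (A k) (A i) (A l)
        ⟨hnc1, hnc2, hτs, hτ's, ?_, ?_⟩
      · rw [hτ'l]; exact hl
      · rw [hτi, hτ'l]; exact h i l
    rw [key, hτi]

lemma core (e1 e2 : Bool) {m : ℕ} (A B : Fin m → V3)
    (h : ∀ i j, D e1 e2 (xo (A i) (A j)) (xo (B i) (B j)))
    (h0 : ∀ i, D e1 e2 (A i) (B i)) :
    ∃ σ ∈ Lee e1 e2, ∀ i, σ (A i) = B i := by
  by_cases hAll : ∀ i, B i = A i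
  · exact ⟨id, lee_id e1 e2, fun i => (hAll i).symm⟩
  · push_neg at hAll
    obtain ⟨k, hk⟩ := hAll
    obtain ⟨σ₀, hσ₀mem, hσ₀k⟩ := h0 k
    obtain ⟨τ, hτmem, hτσ, hστ⟩ := lee_inv e1 e2 σ₀ hσ₀mem
    set B' : Fin m → V3 := fun i => τ (B i) with hB'
    have hB'k : B' k = A k := by
      simp only [hB']
      rw [← hσ₀k, hτσ]
    have hnc1 : A k ≠ (false, false, false) := by
      intro hc
      apply hk
      rw [← hσ₀k, hc, (lee_const e1 e2 σ₀ hσ₀mem).1]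
    have hnc2 : A k ≠ (true, true, true) := by
      intro hc
      apply hk
      rw [← hσ₀k, hc, (lee_const e1 e2 σ₀ hσ₀mem).2]
    have h' : ∀ i j, D e1 e2 (xo (A i) (A j)) (xo (B' i) (B' j)) := by
      intro i j
      have : xo (B' i) (B' j) = τ (xo (B i) (B j)) := by
        simp only [hB']
        rw [lee_xo e1 e2 τ hτmem]
      rw [this]
      exact D_trans e1 e2 τ hτmem (h i j)
    have h0' : ∀ i, D e1 e2 (A i) (B' i) := fun i => D_trans e1 e2 τ hτmem (h0 i)
    obtain ⟨σ₁, hσ₁mem, hσ₁⟩ := core2 e1 e2 A B' h' h0' k hB'k hnc1 hnc2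
    obtain ⟨ρ, hρmem, hρval⟩ := lee_comp e1 e2 σ₀ hσ₀mem σ₁ hσ₁mem
    refine ⟨ρ, hρmem, fun i => ?_⟩
    rw [hρval, hσ₁ i]
    simp only [hB']
    rw [hστ]


noncomputable def qf (a b c : ℝ) (t : V3) : ℝ :=
  (cond t.1 (a^2) 0) + (cond t.2.1 (b^2) 0) + (cond t.2.2 (c^2) 0)

noncomputable def vert (a b c : ℝ) (t : V3) : EuclideanSpace ℝ (Fin 3) :=
  WithLp.toLp 2 ![cond t.1 a 0, cond t.2.1 b 0, cond t.2.2 c 0]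

lemma vert_mem (a b c : ℝ) (t : V3) : vert a b c t ∈ boxVerts a b c := by
  refine ⟨?_, ?_, ?_⟩ <;>
    simp only [vert, PiLp.toLp_apply, Matrix.cons_val_zero, Matrix.cons_val_one, Matrix.head_cons] <;>
    [cases t.1; cases t.2.1; skip] <;> simp
  · cases t.2.2 <;> simp [Matrix.cons_val_two, Matrix.tail_cons]

lemma qf_nonneg (a b c : ℝ) (t : V3) : 0 ≤ qf a b c t := by
  obtain ⟨x, y, z⟩ := t
  cases x <;> cases y <;> cases z <;> simp [qf] <;> positivity

lemma dist_vert (a b c : ℝ) (u v : V3) :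
    dist (vert a b c u) (vert a b c v) = Real.sqrt (qf a b c (xo u v)) := by
  rw [EuclideanSpace.dist_eq]
  congr 1
  rw [Fin.sum_univ_three]
  obtain ⟨x, y, z⟩ := u; obtain ⟨x', y', z'⟩ := v
  simp only [vert, PiLp.toLp_apply, Matrix.cons_val_zero, Matrix.cons_val_one, Matrix.head_cons,
    Matrix.cons_val_two, Matrix.tail_cons, xo, qf]
  cases x <;> cases x' <;> cases y <;> cases y' <;> cases z <;> cases z' <;>
    simp [Real.dist_eq, sq_abs] <;> ring

lemma vert_inj {a b c : ℝ} (ha : a ≠ 0) (hb : b ≠ 0) (hc : c ≠ 0) :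
    Function.Injective (vert a b c) := by
  intro t t' h
  obtain ⟨x, y, z⟩ := t; obtain ⟨x', y', z'⟩ := t'
  have h0 := congrFun (congrArg WithLp.ofLp h) 0
  have h1 := congrFun (congrArg WithLp.ofLp h) 1
  have h2 := congrFun (congrArg WithLp.ofLp h) 2
  simp only [vert, PiLp.toLp_apply, Matrix.cons_val_zero, Matrix.cons_val_one, Matrix.head_cons,
    Matrix.cons_val_two, Matrix.tail_cons] at h0 h1 h2
  cases x <;> cases x' <;> cases y <;> cases y' <;> cases z <;> cases z' <;>
    simp_all <;> tauto

lemma vert_surj {a b c : ℝ} (p : EuclideanSpace ℝ (Fin 3)) (hp : p ∈ boxVerts a b c) :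
    ∃ t : V3, vert a b c t = p := by
  obtain ⟨h0, h1, h2⟩ := hp
  refine ⟨(if p 0 = 0 then false else true, if p 1 = 0 then false else true,
    if p 2 = 0 then false else true), ?_⟩
  ext i
  fin_cases i <;>
    simp only [vert, PiLp.toLp_apply, Matrix.cons_val_zero, Matrix.cons_val_one, Matrix.head_cons,
      Matrix.cons_val_two, Matrix.tail_cons]
  · rcases h0 with h | h
    · simp [h]
    · by_cases h' : a = 0 <;> simp [h, h']
  · rcases h1 with h | h
    · simp [h]
    · by_cases h' : b = 0 <;> simp [h, h']
  · rcases h2 with h | h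
    · simp [h]
    · by_cases h' : c = 0 <;> simp [h, h']

noncomputable def EV {a b c : ℝ} (ha : a ≠ 0) (hb : b ≠ 0) (hc : c ≠ 0) :
    V3 ≃ ↥(boxVerts a b c) :=
  Equiv.ofBijective (fun t => ⟨vert a b c t, vert_mem a b c t⟩)
    ⟨fun t t' h => vert_inj ha hb hc (congrArg Subtype.val h),
     fun p => by
      obtain ⟨t, ht⟩ := vert_surj p.1 p.2
      exact ⟨t, Subtype.ext ht⟩⟩

lemma dist_EV {a b c : ℝ} (ha : a ≠ 0) (hb : b ≠ 0) (hc : c ≠ 0) (u v : V3) :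
    dist (EV ha hb hc u) (EV ha hb hc v) = Real.sqrt (qf a b c (xo u v)) := by
  rw [Subtype.dist_eq]
  exact dist_vert a b c u v

lemma build_isometry {a b c : ℝ} (ha : a ≠ 0) (hb : b ≠ 0) (hc : c ≠ 0)
    (g : V3 → V3) (hg : ∀ u v, qf a b c (xo (g u) (g v)) = qf a b c (xo u v))
    (hgi : Function.Injective g) :
    ∃ e : ↥(boxVerts a b c) ≃ᵢ ↥(boxVerts a b c), ∀ t : V3,
      e (EV ha hb hc t) = EV ha hb hc (g t) := by
  have hbij : Function.Bijective g := Finite.injective_iff_bijective.mp hgi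
  let G : V3 ≃ V3 := Equiv.ofBijective g hbij
  let E := EV ha hb hc
  refine ⟨⟨E.symm.trans (G.trans E), Isometry.of_dist_eq fun x y => ?_⟩, fun t => ?_⟩
  · show dist (E (G (E.symm x))) (E (G (E.symm y))) = dist x y
    conv_rhs => rw [← Equiv.apply_symm_apply E x, ← Equiv.apply_symm_apply E y]
    rw [dist_EV ha hb hc, dist_EV ha hb hc]
    congr 1
    exact hg (E.symm x) (E.symm y)
  · show E (G (E.symm (E t))) = E (g t)
    rw [Equiv.symm_apply_apply]
    rfl

lemma sq_eq' {x y : ℝ} (hx : 0 ≤ x) (hy : 0 ≤ y) (h : x ^ 2 = y ^ 2) : x = y :=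
  le_antisymm (by nlinarith) (by nlinarith)

lemma q_to_D {a b c : ℝ} (ha : 0 < a) (hab : a ≤ b) (hbc : b ≤ c)
    (hne : a ^ 2 + b ^ 2 ≠ c ^ 2) (e1 e2 : Bool)
    (he1 : a = b → e1 = true) (he2 : b = c → e2 = true)
    (t t' : V3) (h : qf a b c t = qf a b c t') : D e1 e2 t t' := by
  have hb : 0 < b := lt_of_lt_of_le ha hab
  have hc : 0 < c := lt_of_lt_of_le hb hbc
  have hsa : 0 < a ^ 2 := by positivity
  have hsb : 0 < b ^ 2 := by positivity
  have hsc : 0 < c ^ 2 := by positivity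
  have hs1 : a ^ 2 ≤ b ^ 2 := by nlinarith
  have hs2 : b ^ 2 ≤ c ^ 2 := by nlinarith
  obtain ⟨x, y, z⟩ := t; obtain ⟨x', y', z'⟩ := t'
  cases x <;> cases y <;> cases z <;> cases x' <;> cases y' <;> cases z' <;>
    simp only [qf, cond_true, cond_false, zero_add, add_zero] at h <;>
    first
    | exact ⟨id, lee_id e1 e2, rfl⟩
    | exact absurd h hne
    | exact absurd h.symm hne
    | (have hab' : a = b := sq_eq' ha.le hb.le (by linarith)
       exact ⟨s12, by simp [Lee, he1 hab'], rfl⟩)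
    | (have hbc' : b = c := sq_eq' hb.le hc.le (by linarith)
       exact ⟨s23, by simp [Lee, he2 hbc'], rfl⟩)
    | (have hac : a = c := sq_eq' ha.le hc.le (by linarith)
       have hab' : a = b := le_antisymm hab (by linarith)
       have hbc' : b = c := le_antisymm hbc (by linarith)
       exact ⟨s13, by simp [Lee, he1 hab', he2 hbc'], rfl⟩)
    | (exfalso; linarith)

lemma lee_qf {a b c : ℝ} (e1 e2 : Bool) (he1 : e1 = true → a = b) (he2 : e2 = true → b = c) :
    ∀ σ ∈ Lee e1 e2, ∀ t, qf a b c (σ t) = qf a b c t := by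
  intro σ hσ t
  cases e1 <;> cases e2 <;> fin_cases hσ <;> obtain ⟨x, y, z⟩ := t <;>
    simp only [qf, s12, s23, s13, rr1, rr2, id_eq] <;>
    (try rw [he1 rfl]) <;> (try rw [he2 rfl]) <;> ring

lemma sqrt_eq_sqrt {x y : ℝ} (hx : 0 ≤ x) (hy : 0 ≤ y) (h : Real.sqrt x = Real.sqrt y) :
    x = y := by
  rw [← Real.sq_sqrt hx, ← Real.sq_sqrt hy, h]

lemma vtrans {a b c : ℝ} (ha : a ≠ 0) (hb : b ≠ 0) (hc : c ≠ 0)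
    (p p' : ↥(boxVerts a b c)) :
    ∃ e : ↥(boxVerts a b c) ≃ᵢ ↥(boxVerts a b c), e p = p' := by
  set E := EV ha hb hc with hE
  set tp := E.symm p
  set tq := E.symm p'
  set g : V3 → V3 := fun v => xo v (xo tp tq) with hgdef
  have hg : ∀ u v, qf a b c (xo (g u) (g v)) = qf a b c (xo u v) := by
    intro u v
    simp only [hgdef]
    rw [xo_cancel]
  have hgi : Function.Injective g := by
    intro u v h
    have := congrArg (fun w => xo w (xo tp tq)) h
    simpa only [hgdef, xo_xo] using this
  obtain ⟨e, he⟩ := build_isometry ha hb hc g hg hgi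
  refine ⟨e, ?_⟩
  have h1 : p = E tp := (Equiv.apply_symm_apply E p).symm
  have h2 : p' = E tq := (Equiv.apply_symm_apply E p').symm
  rw [h1, he tp]
  simp only [hgdef]
  rw [xo_left, ← h2]

lemma neg2 {a b c : ℝ} (ha : 0 < a) (hab : a ≤ b) (hbc : b ≤ c)
    (heq : a ^ 2 + b ^ 2 = c ^ 2) : ¬ mPointHomogeneous (boxVerts a b c) 2 := by
  have hb : 0 < b := lt_of_lt_of_le ha hab
  have hc : 0 < c := lt_of_lt_of_le hb hbc
  have hsa : 0 < a ^ 2 := by positivity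
  have hsb : 0 < b ^ 2 := by positivity
  have hsc : 0 < c ^ 2 := by positivity
  have hs1 : a ^ 2 ≤ b ^ 2 := by nlinarith
  have hs2 : b ^ 2 ≤ c ^ 2 := by nlinarith
  set E := EV ha.ne' hb.ne' hc.ne' with hE
  intro hhom
  have hdEV : ∀ u v : V3, dist (E u) (E v) = Real.sqrt (qf a b c (xo u v)) :=
    fun u v => dist_EV ha.ne' hb.ne' hc.ne' u v
  set A : Fin 2 → ↥(boxVerts a b c) := ![E (false, false, false), E (true, true, false)] with hA
  set B : Fin 2 → ↥(boxVerts a b c) := ![E (false, false, false), E (false, false, true)] with hB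
  have hdist : ∀ i j, dist (A i) (A j) = dist (B i) (B j) := by
    intro i j
    fin_cases i <;> fin_cases j <;>
      simp only [hA, hB, Fin.mk_zero, Fin.mk_one, Fin.isValue, Matrix.cons_val_zero,
        Matrix.cons_val_one, Matrix.head_cons] <;>
      rw [hdEV, hdEV] <;> simp only [xo] <;> norm_num [qf] <;> rw [heq]
  obtain ⟨e, he⟩ := hhom A B hdist
  set w := E (true, false, false) with hw
  set t' := E.symm (e w) with ht'
  have hew : e w = E t' := (Equiv.apply_symm_apply E (e w)).symm
  have h1 : dist (e (A 0)) (e w) = dist (A 0) w := e.dist_eq _ _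
  have h2 : dist (e (A 1)) (e w) = dist (A 1) w := e.dist_eq _ _
  rw [he 0, hew] at h1
  rw [he 1, hew] at h2
  have hA0 : A 0 = E (false, false, false) := by simp [hA]
  have hA1 : A 1 = E (true, true, false) := by simp [hA]
  have hB0 : B 0 = E (false, false, false) := by simp [hB]
  have hB1 : B 1 = E (false, false, true) := by simp [hB]
  rw [hB0, hA0, hw, hdEV, hdEV] at h1
  rw [hB1, hA1, hw, hdEV, hdEV] at h2
  have hq1 : qf a b c (xo (false, false, false) t') =
      qf a b c (xo (false, false, false) (true, false, false)) :=
    sqrt_eq_sqrt (qf_nonneg _ _ _ _) (qf_nonneg _ _ _ _) h1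
  have hq2 : qf a b c (xo (false, false, true) t') =
      qf a b c (xo (true, true, false) (true, false, false)) :=
    sqrt_eq_sqrt (qf_nonneg _ _ _ _) (qf_nonneg _ _ _ _) h2
  clear h1 h2
  obtain ⟨x, y, z⟩ := t'
  cases x <;> cases y <;> cases z <;>
    simp only [xo, qf, Bool.xor_false, Bool.xor_true, Bool.false_xor, Bool.true_xor,
      Bool.not_true, Bool.not_false, cond_true, cond_false, zero_add, add_zero] at hq1 hq2 <;>
    linarith

lemma posHom {a b c : ℝ} (ha : 0 < a) (hab : a ≤ b) (hbc : b ≤ c)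
    (hne : a ^ 2 + b ^ 2 ≠ c ^ 2) (m : ℕ) : mPointHomogeneous (boxVerts a b c) m := by
  have hb : 0 < b := lt_of_lt_of_le ha hab
  have hc : 0 < c := lt_of_lt_of_le hb hbc
  intro A B hAB
  cases m with
  | zero => exact ⟨IsometryEquiv.refl _, fun i => i.elim0⟩
  | succ n =>
    set E := EV ha.ne' hb.ne' hc.ne' with hE
    have hdEV : ∀ u v : V3, dist (E u) (E v) = Real.sqrt (qf a b c (xo u v)) :=
      fun u v => dist_EV ha.ne' hb.ne' hc.ne' u v
    set At : Fin (n + 1) → V3 := fun i => E.symm (A i) with hAt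
    set Bt : Fin (n + 1) → V3 := fun i => E.symm (B i) with hBt
    have hq : ∀ i j, qf a b c (xo (At i) (At j)) = qf a b c (xo (Bt i) (Bt j)) := by
      intro i j
      have h1 : dist (A i) (A j) = Real.sqrt (qf a b c (xo (At i) (At j))) := by
        rw [← hdEV]
        simp only [hAt, Equiv.apply_symm_apply]
      have h2 : dist (B i) (B j) = Real.sqrt (qf a b c (xo (Bt i) (Bt j))) := by
        rw [← hdEV]
        simp only [hBt, Equiv.apply_symm_apply]
      exact sqrt_eq_sqrt (qf_nonneg _ _ _ _) (qf_nonneg _ _ _ _)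
        (by rw [← h1, ← h2]; exact hAB i j)
    -- choose case booleans
    obtain ⟨e1, he1, he1'⟩ : ∃ e1 : Bool, (a = b → e1 = true) ∧ (e1 = true → a = b) := by
      by_cases h : a = b
      · exact ⟨true, fun _ => rfl, fun _ => h⟩
      · exact ⟨false, fun hh => absurd hh h, fun hh => by simp at hh⟩
    obtain ⟨e2, he2, he2'⟩ : ∃ e2 : Bool, (b = c → e2 = true) ∧ (e2 = true → b = c) := by
      by_cases h : b = c
      · exact ⟨true, fun _ => rfl, fun _ => h⟩
      · exact ⟨false, fun hh => absurd hh h, fun hh => by simp at hh⟩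
    set A' : Fin (n + 1) → V3 := fun i => xo (At i) (At 0) with hA'
    set B' : Fin (n + 1) → V3 := fun i => xo (Bt i) (Bt 0) with hB'
    have hD : ∀ i j, D e1 e2 (xo (A' i) (A' j)) (xo (B' i) (B' j)) := by
      intro i j
      simp only [hA', hB', xo_cancel]
      exact q_to_D ha hab hbc hne e1 e2 he1 he2 _ _ (hq i j)
    have hD0 : ∀ i, D e1 e2 (A' i) (B' i) := by
      intro i
      exact q_to_D ha hab hbc hne e1 e2 he1 he2 _ _ (hq i 0)
    obtain ⟨σ, hσmem, hσ⟩ := core e1 e2 A' B' hD hD0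
    set g : V3 → V3 := fun v => xo (σ (xo v (At 0))) (Bt 0) with hgdef
    have hgx : ∀ u v, xo (g u) (g v) = σ (xo u v) := by
      intro u v
      simp only [hgdef]
      rw [xo_cancel, ← lee_xo e1 e2 σ hσmem, xo_cancel]
    have hg : ∀ u v, qf a b c (xo (g u) (g v)) = qf a b c (xo u v) := by
      intro u v
      rw [hgx]
      exact lee_qf e1 e2 he1' he2' σ hσmem _
    have hgi : Function.Injective g := by
      obtain ⟨τ, hτmem, hτσ, _⟩ := lee_inv e1 e2 σ hσmem
      intro u v h
      have h1 : σ (xo u (At 0)) = σ (xo v (At 0)) := by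
        have := congrArg (fun w => xo w (Bt 0)) h
        simpa only [hgdef, xo_xo] using this
      have h2 : xo u (At 0) = xo v (At 0) := by
        have := congrArg τ h1
        simpa only [hτσ] using this
      have := congrArg (fun w => xo w (At 0)) h2
      simpa only [xo_xo] using this
    obtain ⟨e, he⟩ := build_isometry ha.ne' hb.ne' hc.ne' g hg hgi
    refine ⟨e, fun i => ?_⟩
    have h1 : A i = E (At i) := by simp only [hAt, Equiv.apply_symm_apply]
    rw [h1, he (At i)]
    have h2 : g (At i) = Bt i := by
      simp only [hgdef]
      have : xo (At i) (At 0) = A' i := rfl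
      rw [this, hσ i]
      simp only [hB', xo_xo]
    rw [h2]
    exact E.apply_symm_apply (B i)

theorem stmt_15 (a b c : ℝ) (ha : 0 < a) (hab : a ≤ b) (hbc : b ≤ c) :
    ((∀ m : ℕ, mPointHomogeneous (boxVerts a b c) m) ↔ a ^ 2 + b ^ 2 ≠ c ^ 2) ∧
    (a ^ 2 + b ^ 2 = c ^ 2 →
      ((∀ p q : ↥(boxVerts a b c), ∃ e : ↥(boxVerts a b c) ≃ᵢ ↥(boxVerts a b c), e p = q) ∧
       ¬ mPointHomogeneous (boxVerts a b c) 2)) := by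
  have hb : 0 < b := lt_of_lt_of_le ha hab
  have hc : 0 < c := lt_of_lt_of_le hb hbc
  constructor
  · constructor
    · intro hall heq
      exact neg2 ha hab hbc heq (hall 2)
    · intro hne m
      exact posHom ha hab hbc hne m
  · intro heq
    exact ⟨fun p q => vtrans ha.ne' hb.ne' hc.ne' p q, neg2 ha hab hbc heq⟩
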